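/- Any maximal common independent set of two matroids on the same ground set has size at least half the size of a maximum common independent set. -/

import Mathlib

open Set

lemma indep_subset_closure_encard_le {α : Type*} {M : Matroid α} {S J : Set α}
    (hS : M.Indep S) (hJ : M.Indep J) (hsub : J ⊆ M.closure S) :
    J.encard ≤ S.encard := by
  obtain ⟨J', hJ', hJJ'⟩ := hJ.subset_isBasis_of_subset hsub (M.closure_subset_ground S)
  calc J.encard ≤ J'.encard := encard_mono hJJ'
    _ = S.encard := hJ'.encard_eq_encard hS.isBasis_closure

/-- Any maximal common independent set of two matroids on the same ground set
has size at least half the size of a maximum common independent set. -/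
theorem maximal_common_indep_half {α : Type*} (M₁ M₂ : Matroid α)
    (hE : M₂.E = M₁.E) (hfin : M₁.E.Finite)
    (S : Set α) (hS₁ : M₁.Indep S) (hS₂ : M₂.Indep S)
    (hmax : ∀ T, M₁.Indep T → M₂.Indep T → S ⊆ T → T = S)
    (r : ℕ) (hr : IsGreatest {n | ∃ T, M₁.Indep T ∧ M₂.Indep T ∧ T.ncard = n} r) :
    r ≤ 2 * S.ncard := by
  obtain ⟨⟨T, hT₁, hT₂, hTcard⟩, -⟩ := hr
  have hTfin : T.Finite := hfin.subset hT₁.subset_ground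
  have hSfin : S.Finite := hfin.subset hS₁.subset_ground
  -- every element of T \ S is in closure₁ S or closure₂ S
  have hsplit : ∀ x ∈ T \ S, x ∈ M₁.closure S ∨ x ∈ M₂.closure S := by
    rintro x ⟨hxT, hxS⟩
    by_contra h
    push_neg at h
    have hx1 : x ∈ M₁.E := hT₁.subset_ground hxT
    have hi1 : M₁.Indep (insert x S) := by
      rw [hS₁.insert_indep_iff_of_notMem hxS]
      exact ⟨hx1, h.1⟩
    have hi2 : M₂.Indep (insert x S) := by
      rw [hS₂.insert_indep_iff_of_notMem hxS]
      exact ⟨hE ▸ hx1, h.2⟩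
    have := hmax _ hi1 hi2 (subset_insert _ _)
    exact hxS (this ▸ mem_insert x S)
  set A₁ : Set α := {x ∈ T \ S | x ∈ M₁.closure S}
  set A₂ : Set α := {x ∈ T \ S | x ∈ M₂.closure S}
  have hcover : T ⊆ (T ∩ S) ∪ A₁ ∪ A₂ := by
    intro x hx
    by_cases hxS : x ∈ S
    · exact Or.inl (Or.inl ⟨hx, hxS⟩)
    · rcases hsplit x ⟨hx, hxS⟩ with h | h
      · exact Or.inl (Or.inr ⟨⟨hx, hxS⟩, h⟩)
      · exact Or.inr ⟨⟨hx, hxS⟩, h⟩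
  -- (T ∩ S) ∪ A₁ is an independent subset of closure₁ S
  have h1 : ((T ∩ S) ∪ A₁).encard ≤ S.encard := by
    refine indep_subset_closure_encard_le hS₁ (hT₁.subset ?_) ?_
    · exact union_subset inter_subset_left (fun x hx => hx.1.1)
    · refine union_subset ?_ (fun x hx => hx.2)
      exact fun x hx => M₁.subset_closure S hS₁.subset_ground hx.2
  have h2 : ((T ∩ S) ∪ A₂).encard ≤ S.encard := by
    refine indep_subset_closure_encard_le hS₂ (hT₂.subset ?_) ?_
    · exact union_subset inter_subset_left (fun x hx => hx.1.1)
    · refine union_subset ?_ (fun x hx => hx.2)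
      exact fun x hx => M₂.subset_closure S hS₂.subset_ground hx.2
  have hkey : T.encard ≤ 2 * S.encard := by
    calc T.encard ≤ ((T ∩ S) ∪ A₁ ∪ A₂).encard := encard_mono hcover
      _ ≤ ((T ∩ S) ∪ A₁).encard + A₂.encard := encard_union_le _ _
      _ ≤ ((T ∩ S) ∪ A₁).encard + ((T ∩ S) ∪ A₂).encard :=
          add_le_add le_rfl (encard_mono subset_union_right)
      _ ≤ S.encard + S.encard := add_le_add h1 h2
      _ = 2 * S.encard := (two_mul _).symm
  rw [← hTcard]
  rw [← hTfin.cast_ncard_eq, ← hSfin.cast_ncard_eq] at hkey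
  exact_mod_cast hkey
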